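/- (Regret bound of generalized EXP with approximate projections.) Let P ⊆ ℝⁿ_{>0} be convex, x₁ ∈ P, and let η₁ ≥ η₂ ≥ ⋯ ≥ η_T > 0 and loss vectors L_t ∈ ℝⁿ satisfy η_t L_{t,i} ≥ −1 for all t, i. Suppose the iterates x_{t+1} ∈ P satisfy D(z, x_{t+1}) ≤ D(z, x̃_{t+1}) + ε_t for all z ∈ P, where x̃_{t+1,i} = x_{1,i}^{1−η_{t+1}/η_t} x_{t,i}^{η_{t+1}/η_t} e^{−η_{t+1} L_{t,i}}. Then for every y ∈ P: ∑_{t=1}^{T} L_tᵀ x_t − ∑_{t=1}^{T} L_tᵀ y ≤ D(y, x₁)/η_T + ∑_{t=1}^{T−1} ε_t/η_{t+1} + (e−2) ∑_{t=1}^{T} η_t ∑_{i=1}^{n} x_{t,i} L_{t,i}². -/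

import Mathlib

lemma real_exp_tsum (x : ℝ) : Real.exp x = ∑' n : ℕ, x ^ n / (n.factorial : ℝ) := by
  rw [Real.exp_eq_exp_ℝ, NormedSpace.exp_eq_tsum_div]

lemma exp_quad {x : ℝ} (hx : x ≤ 1) :
    Real.exp x ≤ 1 + x + (Real.exp 1 - 2) * x ^ 2 := by
  rcases le_or_gt x (-1) with h1 | h1
  · have he : Real.exp x ≤ Real.exp (-1) := Real.exp_le_exp.mpr h1
    have hinv : Real.exp (-1) = (Real.exp 1)⁻¹ := by rw [Real.exp_neg]
    have hgt : (2.7182818283 : ℝ) < Real.exp 1 := Real.exp_one_gt_d9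
    have hpos : (0:ℝ) < Real.exp 1 := Real.exp_pos 1
    have hle : Real.exp (-1) ≤ Real.exp 1 - 2 := by
      rw [hinv, inv_le_iff_one_le_mul₀ hpos]
      nlinarith
    have hq : Real.exp 1 - 2 ≤ 1 + x + (Real.exp 1 - 2) * x ^ 2 := by
      nlinarith [mul_nonneg (neg_nonneg.mpr (by linarith : x + 1 ≤ 0))
        (by nlinarith : -((Real.exp 1 - 2) * (x - 1) + 1) ≥ 0)]
    linarith
  rcases le_or_gt x 0 with h2 | h2
  · have habs : |x| ≤ 1 := abs_le.mpr ⟨h1.le, by linarith⟩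
    have hb := Real.exp_bound habs (by norm_num : 0 < 4)
    norm_num [Nat.factorial] at hb
    have hsum : ∑ i ∈ Finset.range 4, x ^ i / (i.factorial : ℝ)
        = 1 + x + x^2/2 + x^3/6 := by
      rw [Finset.sum_range_succ, Finset.sum_range_succ, Finset.sum_range_succ,
        Finset.sum_range_one]
      norm_num [Nat.factorial]
    rw [hsum] at hb
    have hb2 : Real.exp x ≤ 1 + x + x^2/2 + x^3/6 + |x|^4 * (5/96) := by
      have h := abs_le.mp hb
      nlinarith [h.2]
    have hgt : (2.7182818283 : ℝ) < Real.exp 1 := Real.exp_one_gt_d9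
    have hx3 : x^3 ≤ 0 := by nlinarith
    have hx4 : |x|^4 ≤ x^2 := by
      have h4 : |x|^4 = (x^2)^2 := by rw [← sq_abs x]; ring
      nlinarith [sq_nonneg x]
    nlinarith [sq_nonneg x]
  · have hsx := Real.summable_pow_div_factorial x
    have hs1 := Real.summable_pow_div_factorial (1:ℝ)
    have hsx2 : Summable fun n : ℕ => x ^ (n+2) / ((n+2).factorial : ℝ) :=
      (summable_nat_add_iff (f := fun n => x ^ n / (n.factorial:ℝ)) 2).mpr hsx
    have hs12 : Summable fun n : ℕ => (1:ℝ) ^ (n+2) / ((n+2).factorial : ℝ) :=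
      (summable_nat_add_iff (f := fun n => (1:ℝ) ^ n / (n.factorial:ℝ)) 2).mpr hs1
    have hdx : Real.exp x = 1 + x + ∑' n : ℕ, x ^ (n+2) / ((n+2).factorial : ℝ) := by
      rw [real_exp_tsum, ← Summable.sum_add_tsum_nat_add 2 hsx]
      norm_num [Finset.sum_range_succ]
    have hd1 : Real.exp 1 = 2 + ∑' n : ℕ, (1:ℝ) ^ (n+2) / ((n+2).factorial : ℝ) := by
      rw [real_exp_tsum, ← Summable.sum_add_tsum_nat_add 2 hs1]
      norm_num [Finset.sum_range_succ]
    have hterm : ∀ n : ℕ, x ^ (n+2) / ((n+2).factorial : ℝ)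
        ≤ x^2 * ((1:ℝ) ^ (n+2) / ((n+2).factorial : ℝ)) := by
      intro n
      have hf : (0:ℝ) < ((n+2).factorial : ℝ) := by positivity
      rw [one_pow]
      rw [mul_one_div, div_le_div_iff_of_pos_right hf]
      calc x ^ (n+2) = x^2 * x^n := by ring
        _ ≤ x^2 * 1 := by
            have := pow_le_one₀ h2.le hx (n := n)
            nlinarith [pow_nonneg h2.le 2]
        _ = x^2 := by ring
    have hts : ∑' n : ℕ, x ^ (n+2) / ((n+2).factorial : ℝ)
        ≤ x^2 * ∑' n : ℕ, (1:ℝ) ^ (n+2) / ((n+2).factorial : ℝ) := by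
      rw [← tsum_mul_left]
      exact Summable.tsum_le_tsum hterm hsx2 (hs12.mul_left _)
    nlinarith [hts, hdx, hd1]

noncomputable def KL {n : ℕ} (u v : Fin n → ℝ) : ℝ :=
  ∑ i, u i * Real.log (u i / v i) - ∑ i, u i + ∑ i, v i

lemma KL_nonneg {n : ℕ} {u v : Fin n → ℝ} (hu : ∀ i, 0 < u i) (hv : ∀ i, 0 < v i) :
    0 ≤ KL u v := by
  unfold KL
  rw [← Finset.sum_sub_distrib, ← Finset.sum_add_distrib]
  apply Finset.sum_nonneg
  intro i _
  have h1 : Real.log (v i / u i) ≤ v i / u i - 1 :=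
    Real.log_le_sub_one_of_pos (div_pos (hv i) (hu i))
  have h2 : Real.log (u i / v i) = - Real.log (v i / u i) := by
    rw [← Real.log_inv]
    congr 1
    field_simp
  have h3 : u i * Real.log (u i / v i) ≥ u i - v i := by
    rw [h2]
    have := mul_le_mul_of_nonneg_left h1 (hu i).le
    have huv : u i * (v i / u i - 1) = v i - u i := by
      field_simp [(hu i).ne']
    nlinarith
  linarith



lemma descent {n : ℕ} {y x L : Fin n → ℝ} {η : ℝ} (hy : ∀ i, 0 < y i) (hx : ∀ i, 0 < x i)
    (hη : 0 < η) (hL : ∀ i, -1 ≤ η * L i) :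
    KL y (fun i => x i * Real.exp (-η * L i))
      ≤ KL y x - η * (∑ i, L i * x i) + η * (∑ i, L i * y i)
        + (Real.exp 1 - 2) * (η ^ 2 * ∑ i, x i * L i ^ 2) := by
  unfold KL
  have hlog : ∀ i : Fin n, y i * Real.log (y i / (x i * Real.exp (-η * L i)))
      = y i * Real.log (y i / x i) + η * (L i * y i) := by
    intro i
    rw [div_mul_eq_div_div, Real.log_div (div_pos (hy i) (hx i)).ne' (Real.exp_ne_zero _),
      Real.log_exp]
    ring
  have hexp : ∀ i : Fin n, x i * Real.exp (-η * L i)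
      ≤ x i - η * (L i * x i) + (Real.exp 1 - 2) * (η ^ 2 * (x i * L i ^ 2)) := by
    intro i
    have harg : -η * L i ≤ 1 := by nlinarith [hL i]
    have h := exp_quad harg
    have h2 := mul_le_mul_of_nonneg_left h (hx i).le
    nlinarith [h2]
  have hsl : (∑ i, y i * Real.log (y i / (x i * Real.exp (-η * L i))))
      = ∑ i, (y i * Real.log (y i / x i) + η * (L i * y i)) :=
    Finset.sum_congr rfl fun i _ => hlog i
  have hse : (∑ i, x i * Real.exp (-η * L i))
      ≤ ∑ i, (x i - η * (L i * x i) + (Real.exp 1 - 2) * (η ^ 2 * (x i * L i ^ 2))) :=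
    Finset.sum_le_sum fun i _ => hexp i
  have he1 : ∑ i, (y i * Real.log (y i / x i) + η * (L i * y i))
      = ∑ i, y i * Real.log (y i / x i) + η * ∑ i, L i * y i := by
    rw [Finset.sum_add_distrib, Finset.mul_sum]
  have he2 : ∑ i, (x i - η * (L i * x i) + (Real.exp 1 - 2) * (η ^ 2 * (x i * L i ^ 2)))
      = ∑ i, x i - η * ∑ i, L i * x i
        + (Real.exp 1 - 2) * (η ^ 2 * ∑ i, x i * L i ^ 2) := by
    rw [Finset.sum_add_distrib, Finset.sum_sub_distrib, Finset.mul_sum, Finset.mul_sum,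
      Finset.mul_sum]
  rw [hsl, he1]
  rw [he2] at hse
  linarith

lemma mix_bound {n : ℕ} {y a b : Fin n → ℝ} (hy : ∀ i, 0 < y i) (ha : ∀ i, 0 < a i)
    (hb : ∀ i, 0 < b i) {r : ℝ} (hr0 : 0 ≤ r) (hr1 : r ≤ 1) :
    KL y (fun i => a i ^ (1 - r) * b i ^ r) ≤ (1 - r) * KL y a + r * KL y b := by
  unfold KL
  have hlog : ∀ i : Fin n, y i * Real.log (y i / (a i ^ (1 - r) * b i ^ r))
      = (1 - r) * (y i * Real.log (y i / a i)) + r * (y i * Real.log (y i / b i)) := by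
    intro i
    rw [Real.log_div (hy i).ne'
        (mul_pos (Real.rpow_pos_of_pos (ha i) _) (Real.rpow_pos_of_pos (hb i) _)).ne',
      Real.log_mul (Real.rpow_pos_of_pos (ha i) _).ne' (Real.rpow_pos_of_pos (hb i) _).ne',
      Real.log_rpow (ha i), Real.log_rpow (hb i),
      Real.log_div (hy i).ne' (ha i).ne', Real.log_div (hy i).ne' (hb i).ne']
    ring
  have ham : ∀ i : Fin n, a i ^ (1 - r) * b i ^ r ≤ (1 - r) * a i + r * b i := fun i =>
    Real.geom_mean_le_arith_mean2_weighted (by linarith) hr0 (ha i).le (hb i).le (by ring)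
  have hsl : (∑ i, y i * Real.log (y i / (a i ^ (1 - r) * b i ^ r)))
      = (1 - r) * ∑ i, y i * Real.log (y i / a i) + r * ∑ i, y i * Real.log (y i / b i) := by
    rw [Finset.mul_sum, Finset.mul_sum, ← Finset.sum_add_distrib]
    exact Finset.sum_congr rfl fun i _ => hlog i
  have hse : (∑ i, a i ^ (1 - r) * b i ^ r) ≤ (1 - r) * ∑ i, a i + r * ∑ i, b i := by
    rw [Finset.mul_sum, Finset.mul_sum, ← Finset.sum_add_distrib]
    exact Finset.sum_le_sum fun i _ => ham i
  rw [hsl]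
  nlinarith [hse]

/-- Regret bound for generalized EXP with time-varying parameters and
approximate Bregman (KL) projections onto a convex set `P ⊆ ℝⁿ_{>0}`. -/
theorem exp_regret_bound (n : ℕ) (P : Set (Fin n → ℝ)) (hPconv : Convex ℝ P)
    (hPpos : ∀ z ∈ P, ∀ i, 0 < z i)
    (T : ℕ) (hT : 1 ≤ T)
    (x : ℕ → (Fin n → ℝ)) (L : ℕ → (Fin n → ℝ)) (η : ℕ → ℝ) (ε : ℕ → ℝ)
    (hx₁ : x 1 ∈ P)
    (hxP : ∀ t, 1 ≤ t → t ≤ T → x t ∈ P)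
    (hηpos : ∀ t, 1 ≤ t → t ≤ T → 0 < η t)
    (hηmono : ∀ t, 1 ≤ t → t < T → η (t + 1) ≤ η t)
    (hεpos : ∀ t, 1 ≤ t → t < T → 0 ≤ ε t)
    (hL : ∀ t, 1 ≤ t → t ≤ T → ∀ i, -1 ≤ η t * L t i)
    (hproj : ∀ t, 1 ≤ t → t < T → ∀ z ∈ P,
      KL z (x (t + 1))
        ≤ KL z (fun i =>
            x 1 i ^ (1 - η (t + 1) / η t) * x t i ^ (η (t + 1) / η t)
              * Real.exp (-(η (t + 1)) * L t i)) + ε t) :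
    ∀ y ∈ P,
      ∑ t ∈ Finset.Icc 1 T, (∑ i, L t i * x t i)
          - ∑ t ∈ Finset.Icc 1 T, (∑ i, L t i * y i)
        ≤ KL y (x 1) / η T
          + ∑ t ∈ Finset.Icc 1 (T - 1), ε t / η (t + 1)
          + (Real.exp 1 - 2) * ∑ t ∈ Finset.Icc 1 T, η t * ∑ i, x t i * (L t i) ^ 2 := by
  intro y hy
  have hy' : ∀ i, 0 < y i := hPpos y hy
  have hx1' : ∀ i, 0 < x 1 i := hPpos _ hx₁
  have key : ∀ m, 1 ≤ m → m ≤ T →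
      ∑ t ∈ Finset.Icc 1 m, (∑ i, L t i * x t i)
          - ∑ t ∈ Finset.Icc 1 m, (∑ i, L t i * y i)
          + KL y (fun i => x m i * Real.exp (-η m * L m i)) / η m
        ≤ KL y (x 1) / η m
          + ∑ t ∈ Finset.Icc 1 (m - 1), ε t / η (t + 1)
          + (Real.exp 1 - 2) * ∑ t ∈ Finset.Icc 1 m, η t * ∑ i, x t i * (L t i) ^ 2 := by
    intro m hm
    induction m, hm using Nat.le_induction with
    | base =>
      intro _
      have hη1 : 0 < η 1 := hηpos 1 le_rfl hT
      have hd := descent (L := L 1) hy' hx1' hη1 (hL 1 le_rfl hT)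
      simp only [Finset.Icc_self, Finset.sum_singleton, Nat.sub_self, show (1:ℕ)-1 = 0 from rfl]
      rw [show Finset.Icc 1 0 = (∅ : Finset ℕ) from rfl]
      simp only [Finset.sum_empty, add_zero]
      have h2 : KL y (fun i => x 1 i * Real.exp (-η 1 * L 1 i)) / η 1
          ≤ (KL y (x 1) - η 1 * (∑ i, L 1 i * x 1 i) + η 1 * (∑ i, L 1 i * y i)
              + (Real.exp 1 - 2) * (η 1 ^ 2 * ∑ i, x 1 i * L 1 i ^ 2)) / η 1 := by
        gcongr
      have h3 : (KL y (x 1) - η 1 * (∑ i, L 1 i * x 1 i) + η 1 * (∑ i, L 1 i * y i)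
              + (Real.exp 1 - 2) * (η 1 ^ 2 * ∑ i, x 1 i * L 1 i ^ 2)) / η 1
          = KL y (x 1) / η 1 - (∑ i, L 1 i * x 1 i) + (∑ i, L 1 i * y i)
              + (Real.exp 1 - 2) * (η 1 * ∑ i, x 1 i * L 1 i ^ 2) := by
        field_simp
      rw [h3] at h2
      linarith
    | succ m hm ih =>
      intro hmT
      have hmT' : m ≤ T := by omega
      have hmlt : m < T := by omega
      have ihm := ih hmT'
      have ha : 0 < η m := hηpos m hm hmT'
      have hb : 0 < η (m + 1) := hηpos (m + 1) (by omega) hmT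
      have hba : η (m + 1) ≤ η m := hηmono m hm hmlt
      have hr0 : 0 ≤ η (m + 1) / η m := by positivity
      have hr1 : η (m + 1) / η m ≤ 1 := (div_le_one ha).mpr hba
      have hxm : ∀ i, 0 < x m i := hPpos _ (hxP m hm hmT')
      have hxm1 : ∀ i, 0 < x (m + 1) i := hPpos _ (hxP (m + 1) (by omega) hmT)
      have hwm : ∀ i, 0 < x m i * Real.exp (-η m * L m i) :=
        fun i => mul_pos (hxm i) (Real.exp_pos _)
      have P2 := mix_bound (a := x 1) (b := fun i => x m i * Real.exp (-η m * L m i))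
        hy' hx1' hwm hr0 hr1
      have hfeq : (fun i =>
            x 1 i ^ (1 - η (m + 1) / η m) * x m i ^ (η (m + 1) / η m)
              * Real.exp (-(η (m + 1)) * L m i))
          = (fun i => x 1 i ^ (1 - η (m + 1) / η m)
              * (x m i * Real.exp (-η m * L m i)) ^ (η (m + 1) / η m)) := by
        funext i
        rw [Real.mul_rpow (hxm i).le (Real.exp_pos _).le, ← Real.exp_mul]
        have harg : -η m * L m i * (η (m + 1) / η m) = -(η (m + 1)) * L m i := by
          field_simp
        rw [harg, mul_assoc]
      have P1 := hproj m hm hmlt y hy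
      rw [hfeq] at P1
      have P12 : KL y (x (m + 1))
          ≤ (1 - η (m + 1) / η m) * KL y (x 1)
            + (η (m + 1) / η m) * KL y (fun i => x m i * Real.exp (-η m * L m i))
            + ε m := by linarith
      have key1 : KL y (x (m + 1)) / η (m + 1)
          ≤ KL y (x 1) / η (m + 1) - KL y (x 1) / η m
            + KL y (fun i => x m i * Real.exp (-η m * L m i)) / η m
            + ε m / η (m + 1) := by
        have h2 : KL y (x (m + 1)) / η (m + 1)
            ≤ ((1 - η (m + 1) / η m) * KL y (x 1)
              + (η (m + 1) / η m) * KL y (fun i => x m i * Real.exp (-η m * L m i))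
              + ε m) / η (m + 1) := by gcongr
        have h3 : ((1 - η (m + 1) / η m) * KL y (x 1)
              + (η (m + 1) / η m) * KL y (fun i => x m i * Real.exp (-η m * L m i))
              + ε m) / η (m + 1)
            = KL y (x 1) / η (m + 1) - KL y (x 1) / η m
              + KL y (fun i => x m i * Real.exp (-η m * L m i)) / η m
              + ε m / η (m + 1) := by
          field_simp
        rw [h3] at h2
        exact h2
      have P3 := descent (x := x (m + 1)) (L := L (m + 1)) hy' hxm1 hb
        (hL (m + 1) (by omega) hmT)
      have key2 : KL y (fun i => x (m + 1) i * Real.exp (-η (m + 1) * L (m + 1) i)) / η (m + 1)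
          ≤ KL y (x (m + 1)) / η (m + 1) - (∑ i, L (m + 1) i * x (m + 1) i)
            + (∑ i, L (m + 1) i * y i)
            + (Real.exp 1 - 2) * (η (m + 1) * ∑ i, x (m + 1) i * L (m + 1) i ^ 2) := by
        have h2 : KL y (fun i => x (m + 1) i * Real.exp (-η (m + 1) * L (m + 1) i)) / η (m + 1)
            ≤ (KL y (x (m + 1)) - η (m + 1) * (∑ i, L (m + 1) i * x (m + 1) i)
              + η (m + 1) * (∑ i, L (m + 1) i * y i)
              + (Real.exp 1 - 2) * (η (m + 1) ^ 2 * ∑ i, x (m + 1) i * L (m + 1) i ^ 2))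
                / η (m + 1) := by gcongr
        have h3 : (KL y (x (m + 1)) - η (m + 1) * (∑ i, L (m + 1) i * x (m + 1) i)
              + η (m + 1) * (∑ i, L (m + 1) i * y i)
              + (Real.exp 1 - 2) * (η (m + 1) ^ 2 * ∑ i, x (m + 1) i * L (m + 1) i ^ 2))
                / η (m + 1)
            = KL y (x (m + 1)) / η (m + 1) - (∑ i, L (m + 1) i * x (m + 1) i)
              + (∑ i, L (m + 1) i * y i)
              + (Real.exp 1 - 2) * (η (m + 1) * ∑ i, x (m + 1) i * L (m + 1) i ^ 2) := by
          field_simp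
        rw [h3] at h2
        exact h2
      have hs1 : ∑ t ∈ Finset.Icc 1 (m + 1), (∑ i, L t i * x t i)
          = ∑ t ∈ Finset.Icc 1 m, (∑ i, L t i * x t i) + ∑ i, L (m + 1) i * x (m + 1) i :=
        Finset.sum_Icc_succ_top (by omega) _
      have hs2 : ∑ t ∈ Finset.Icc 1 (m + 1), (∑ i, L t i * y i)
          = ∑ t ∈ Finset.Icc 1 m, (∑ i, L t i * y i) + ∑ i, L (m + 1) i * y i :=
        Finset.sum_Icc_succ_top (by omega) _
      have hs3 : ∑ t ∈ Finset.Icc 1 (m + 1), η t * ∑ i, x t i * (L t i) ^ 2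
          = ∑ t ∈ Finset.Icc 1 m, η t * ∑ i, x t i * (L t i) ^ 2
            + η (m + 1) * ∑ i, x (m + 1) i * (L (m + 1) i) ^ 2 :=
        Finset.sum_Icc_succ_top (by omega) _
      have hm1 : m - 1 + 1 = m := Nat.succ_pred_eq_of_pos hm
      have hs4 : ∑ t ∈ Finset.Icc 1 (m + 1 - 1), ε t / η (t + 1)
          = ∑ t ∈ Finset.Icc 1 (m - 1), ε t / η (t + 1) + ε m / η (m + 1) := by
        rw [show m + 1 - 1 = m from rfl]
        conv_lhs => rw [← hm1]
        rw [Finset.sum_Icc_succ_top (by omega)]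
        rw [hm1]
      rw [hs1, hs2, hs3, hs4]
      linarith
  have hfin := key T hT le_rfl
  have hxT : ∀ i, 0 < x T i := hPpos _ (hxP T hT le_rfl)
  have hWT : 0 ≤ KL y (fun i => x T i * Real.exp (-η T * L T i)) :=
    KL_nonneg hy' fun i => mul_pos (hxT i) (Real.exp_pos _)
  have hηT : 0 < η T := hηpos T hT le_rfl
  have : 0 ≤ KL y (fun i => x T i * Real.exp (-η T * L T i)) / η T := by positivity
  linarith
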